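/- Let s be a simple object in the finite-length heart A of a bounded t-structure on C. Then s[-1] is a simple object of the left tilt L_s A = ⟨⟨s⟩^⊥, ⟨s⟩[-1]⟩, and every other simple object of L_s A lies in ⟨s⟩^⊥. -/

import Mathlib

open CategoryTheory Category Limits Pretriangulated

universe v u

variable (C : Type u) [Category.{v} C] [HasZeroObject C] [HasShift C ℤ]
  [Preadditive C] [∀ n : ℤ, (CategoryTheory.shiftFunctor C n).Additive] [Pretriangulated C]

namespace Paper

/-- The right perpendicular of a set of objects. -/
def perpSet (D : Set C) : Set C := {c | ∀ d ∈ D, ∀ φ : d ⟶ c, φ = 0}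

/-- A `t`-structure given by its aisle `D`. -/
structure IsTStructure (D : Set C) : Prop where
  isoClosed : ∀ {x y : C}, (x ≅ y) → x ∈ D → y ∈ D
  shift_mem : ∀ d ∈ D, d⟦(1 : ℤ)⟧ ∈ D
  exists_triangle : ∀ c : C, ∃ d ∈ D, ∃ d' ∈ perpSet C D,
    ∃ (f : d ⟶ c) (g : c ⟶ d') (h : d' ⟶ d⟦(1 : ℤ)⟧),
      Triangle.mk f g h ∈ distTriang C

/-- The shift `S[n]` of a set of objects. -/
def shiftSet (S : Set C) (n : ℤ) : Set C := {c | c⟦(-n : ℤ)⟧ ∈ S}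

/-- The heart `D ∩ D^⊥[1]` of a `t`-structure. -/
def heartSet (D : Set C) : Set C := {c | c ∈ D ∧ c⟦(-1 : ℤ)⟧ ∈ perpSet C D}

/-- Boundedness: every object lies in `D[-n] ∩ D^⊥[n]` for some `n`. -/
def IsBounded (D : Set C) : Prop :=
  ∀ c : C, ∃ n : ℕ, c⟦(n : ℤ)⟧ ∈ D ∧ c⟦(-(n : ℤ))⟧ ∈ perpSet C D

/-- A short exact sequence `0 → t → a → f → 0` in the heart `A`, encoded as a
distinguished triangle `t → a → f → t[1]` whose objects all lie in `A`. -/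
def heartTriangle (A : Set C) (t a f : C) : Prop :=
  t ∈ A ∧ a ∈ A ∧ f ∈ A ∧
    ∃ (i : t ⟶ a) (p : a ⟶ f) (h : f ⟶ t⟦(1 : ℤ)⟧), Triangle.mk i p h ∈ distTriang C

/-- `x` is a simple object of the heart `A`. -/
def SimpleIn (A : Set C) (x : C) : Prop :=
  x ∈ A ∧ ¬ IsZero x ∧ ∀ t f : C, heartTriangle C A t x f → IsZero t ∨ IsZero f

/-- The extension-closed subcategory of `C` generated by `S`. -/
inductive ExtClosure (S : Set C) : C → Prop
  | of {c : C} (h : c ∈ S) : ExtClosure S c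
  | zero {c : C} (h : IsZero c) : ExtClosure S c
  | iso {x y : C} (e : x ≅ y) (h : ExtClosure S x) : ExtClosure S y
  | ext {a b c : C} (f : a ⟶ b) (g : b ⟶ c) (h : c ⟶ a⟦(1 : ℤ)⟧)
      (hT : Triangle.mk f g h ∈ distTriang C)
      (ha : ExtClosure S a) (hc : ExtClosure S c) : ExtClosure S b

/-- The extension closure of `S` inside the heart `A`. -/
inductive HeartExt (A : Set C) (S : Set C) : C → Prop
  | of {c : C} (h : c ∈ S) : HeartExt A S c
  | zero {c : C} (h : IsZero c) (hA : c ∈ A) : HeartExt A S c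
  | iso {x y : C} (e : x ≅ y) (hy : y ∈ A) (h : HeartExt A S x) : HeartExt A S y
  | ext {t a f : C} (ht : HeartExt A S t) (hf : HeartExt A S f)
      (h : heartTriangle C A t a f) : HeartExt A S a

/-- A torsion pair `(T, F)` in the heart `A`. -/
structure TorsionPairIn (A T F : Set C) : Prop where
  subT : T ⊆ A
  subF : F ⊆ A
  isoT : ∀ {x y : C}, (x ≅ y) → x ∈ T → y ∈ T
  isoF : ∀ {x y : C}, (x ≅ y) → x ∈ F → y ∈ F
  hom_zero : ∀ t ∈ T, ∀ f ∈ F, ∀ φ : t ⟶ f, φ = 0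
  exists_ses : ∀ a ∈ A, ∃ t ∈ T, ∃ f ∈ F, heartTriangle C A t a f

/-- The perpendicular of `T` taken inside the heart `A`. -/
def perpIn (A T : Set C) : Set C := {a | a ∈ A ∧ ∀ t ∈ T, ∀ φ : t ⟶ a, φ = 0}

/-- The left tilt `⟨F, T[-1]⟩` of the heart `A` at a torsion class `T` (with `F = T^⊥ ∩ A`). -/
def leftTilt (A T : Set C) : Set C :=
  {c | ExtClosure C (perpIn C A T ∪ shiftSet C T (-1)) c}

/-- Objects of the heart `A` with a finite composition series. -/
inductive FiniteLengthIn (A : Set C) : C → Prop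
  | zero {a : C} (h : IsZero a) : FiniteLengthIn A a
  | step {s a q : C} (hs : SimpleIn C A s) (hq : FiniteLengthIn A q)
      (ht : heartTriangle C A s a q) : FiniteLengthIn A a



/-! ### Auxiliary development -/

section Aux
set_option linter.unusedSectionVars false

variable {C}

lemma perp_iso {D : Set C} {x y : C} (e : x ≅ y) (hx : x ∈ perpSet C D) :
    y ∈ perpSet C D := by
  intro d hd φ
  have h := hx d hd (φ ≫ e.inv)
  calc φ = (φ ≫ e.inv) ≫ e.hom := by simp
  _ = 0 := by rw [h, zero_comp]

lemma shift_isZero {x : C} (h : IsZero x) (n : ℤ) : IsZero (x⟦n⟧) := by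
  rw [IsZero.iff_id_eq_zero] at h ⊢
  rw [← (shiftFunctor C n).map_id, h, Functor.map_zero]

lemma isZero_of_shift {x : C} (n : ℤ) (h : IsZero (x⟦n⟧)) : IsZero x := by
  rw [IsZero.iff_id_eq_zero] at h ⊢
  apply (shiftFunctor C n).map_injective
  rw [(shiftFunctor C n).map_id, h, Functor.map_zero]

lemma perp_neg {D : Set C} (hD : IsTStructure C D) {y : C}
    (hy : y ∈ perpSet C D) : y⟦(-1 : ℤ)⟧ ∈ perpSet C D := by
  intro d hd φ
  have h1 : (shiftFunctor C (1 : ℤ)).map φ ≫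
      (shiftFunctorCompIsoId C (-1) 1 (by norm_num)).hom.app y = 0 :=
    hy _ (hD.shift_mem d hd) _
  have h2 : (shiftFunctor C (1 : ℤ)).map φ = 0 := by
    have := congrArg (fun g => g ≫ (shiftFunctorCompIsoId C (-1) 1 (by norm_num)).inv.app y) h1
    simpa using this
  exact (shiftFunctor C (1 : ℤ)).map_injective (by rw [h2, Functor.map_zero])

/-- Vanishing of maps `z⟦1⟧ ⟶ y` when `z` is in the aisle and `y⟦-1⟧` is in the perp. -/
lemma V1 {D : Set C} {z y : C} (hz : z ∈ D) (hy : y⟦(-1 : ℤ)⟧ ∈ perpSet C D)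
    (φ : z⟦(1 : ℤ)⟧ ⟶ y) : φ = 0 := by
  have h1 : (shiftFunctorCompIsoId C (1 : ℤ) (-1) (by norm_num)).hom.app z ≫
      ((shiftFunctorCompIsoId C (1 : ℤ) (-1) (by norm_num)).inv.app z ≫
        (shiftFunctor C (-1 : ℤ)).map φ) = 0 := by
    rw [hy z hz ((shiftFunctorCompIsoId C (1 : ℤ) (-1) (by norm_num)).inv.app z ≫
        (shiftFunctor C (-1 : ℤ)).map φ), comp_zero]
  have h2 : (shiftFunctor C (-1 : ℤ)).map φ = 0 := by
    simpa using h1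
  exact (shiftFunctor C (-1 : ℤ)).map_injective (by rw [h2, Functor.map_zero])

lemma mem_D_of_perp {D : Set C} (hD : IsTStructure C D) {x : C}
    (h : ∀ y ∈ perpSet C D, ∀ φ : x ⟶ y, φ = 0) : x ∈ D := by
  obtain ⟨d, hd, d', hd', f, g, h3, hT⟩ := hD.exists_triangle x
  have hg : g = 0 := h d' hd' g
  obtain ⟨ψ, hψ⟩ := Triangle.yoneda_exact₂ _ (rot_of_distTriang _ hT) (𝟙 d')
    (by rw [hg]; exact zero_comp)
  have hψ0 : ψ = 0 := hd' _ (hD.shift_mem d hd) ψ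
  have : IsZero d' := by
    rw [IsZero.iff_id_eq_zero, hψ, hψ0]; exact comp_zero
  have hiso : IsIso f := (Triangle.isZero₃_iff_isIso₁ _ hT).1 this
  exact hD.isoClosed (asIso f) hd

lemma zero_mem_D {D : Set C} (hD : IsTStructure C D) {x : C} (h : IsZero x) : x ∈ D :=
  mem_D_of_perp hD (fun y _ φ => h.eq_of_src φ 0)

lemma zero_mem_perp {D : Set C} {x : C} (h : IsZero x) : x ∈ perpSet C D :=
  fun d _ φ => h.eq_of_tgt φ 0

lemma D_ext {D : Set C} (hD : IsTStructure C D) {T : Triangle C} (hT : T ∈ distTriang C)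
    (h1 : T.obj₁ ∈ D) (h3 : T.obj₃ ∈ D) : T.obj₂ ∈ D := by
  apply mem_D_of_perp hD
  intro y hy ξ
  obtain ⟨ψ, hψ⟩ := Triangle.yoneda_exact₂ _ hT ξ (hy T.obj₁ h1 _)
  rw [hψ, hy _ h3 ψ, comp_zero]

lemma perp_ext {D : Set C} {T : Triangle C} (hT : T ∈ distTriang C)
    (h1 : T.obj₁ ∈ perpSet C D) (h3 : T.obj₃ ∈ perpSet C D) : T.obj₂ ∈ perpSet C D := by
  intro d hd φ
  obtain ⟨g, hg⟩ := Triangle.coyoneda_exact₂ _ hT φ (h3 d hd (φ ≫ T.mor₂))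
  rw [hg, h1 d hd g, zero_comp]

lemma A_iso {D : Set C} (hD : IsTStructure C D) {x y : C} (e : x ≅ y)
    (hx : x ∈ heartSet C D) : y ∈ heartSet C D :=
  ⟨hD.isoClosed e hx.1, perp_iso ((shiftFunctor C (-1 : ℤ)).mapIso e) hx.2⟩

lemma zero_mem_A {D : Set C} (hD : IsTStructure C D) {x : C} (h : IsZero x) :
    x ∈ heartSet C D :=
  ⟨zero_mem_D hD h, zero_mem_perp (shift_isZero h _)⟩


lemma heartTriangle_mk {A : Set C} {t a f : C} (h1 : t ∈ A) (h2 : a ∈ A) (h3 : f ∈ A)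
    {i : t ⟶ a} {p : a ⟶ f} {h : f ⟶ t⟦(1 : ℤ)⟧} (hT : Triangle.mk i p h ∈ distTriang C) :
    heartTriangle C A t a f := by
  unfold heartTriangle
  exact ⟨h1, h2, h3, i, p, h, hT⟩

lemma fib_shift {T : Triangle C} (hT : T ∈ distTriang C) :
    ∃ (w : T.obj₂⟦(-1 : ℤ)⟧ ⟶ T.obj₃⟦(-1 : ℤ)⟧) (δ : T.obj₃⟦(-1 : ℤ)⟧ ⟶ T.obj₁)
      (u : T.obj₁ ⟶ T.obj₂⟦(-1 : ℤ)⟧⟦(1 : ℤ)⟧),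
      Triangle.mk w δ u ∈ (distTriang C) ∧ δ ≫ T.mor₁ = 0 :=
  ⟨T.invRotate.invRotate.mor₁, T.invRotate.mor₁, T.invRotate.invRotate.mor₃,
    inv_rot_of_distTriang _ (inv_rot_of_distTriang _ hT),
    comp_distTriang_mor_zero₁₂ _ (inv_rot_of_distTriang _ hT)⟩

/-- Truncation triangle with lower part in the heart, for `x` co-connective. -/
lemma truncGood {D : Set C} (hD : IsTStructure C D) {x : C}
    (hx : x⟦(-1 : ℤ)⟧ ∈ perpSet C D) :
    ∃ (K d' : C) (α : K ⟶ x) (β : x ⟶ d') (γ : d' ⟶ K⟦(1 : ℤ)⟧),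
      Triangle.mk α β γ ∈ (distTriang C) ∧ K ∈ heartSet C D ∧ d' ∈ perpSet C D := by
  obtain ⟨K, hK, d', hd', α, β, γ, hT⟩ := hD.exists_triangle x
  refine ⟨K, d', α, β, γ, hT, ⟨hK, ?_⟩, hd'⟩
  intro z hz φ
  obtain ⟨g, hg⟩ := Triangle.coyoneda_exact₂ _
    (inv_rot_of_distTriang _ (inv_rot_of_distTriang _ (inv_rot_of_distTriang _
      (inv_rot_of_distTriang _ hT)))) φ (hx z hz _)
  rw [hg, perp_neg hD (perp_neg hD hd') z hz g]; exact zero_comp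

lemma truncUpper {D : Set C} (hD : IsTStructure C D) {x K d' : C}
    {α : K ⟶ x} {β : x ⟶ d'} {γ : d' ⟶ K⟦(1 : ℤ)⟧}
    (hT : Triangle.mk α β γ ∈ distTriang C)
    (hK : K ∈ D) (hd' : d' ∈ perpSet C D) (hx1 : x⟦(1 : ℤ)⟧ ∈ D) :
    d'⟦(1 : ℤ)⟧ ∈ heartSet C D := by
  constructor
  · apply mem_D_of_perp hD
    intro y hy ξ
    obtain ⟨ψ, hψ⟩ := Triangle.yoneda_exact₂ _
      (rot_of_distTriang _ (rot_of_distTriang _ (rot_of_distTriang _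
        (rot_of_distTriang _ hT)))) ξ (hy _ hx1 _)
    rw [hψ, V1 (hD.shift_mem _ hK) (perp_neg hD hy) ψ]; exact comp_zero
  · exact perp_iso ((shiftFunctorCompIsoId C (1 : ℤ) (-1) (by norm_num)).app d').symm hd'

/-- `m` is a monomorphism as detected by maps from the aisle. -/
def Dmono (D : Set C) {x y : C} (m : x ⟶ y) : Prop :=
  ∀ z, z ∈ D → ∀ φ : z ⟶ x, φ ≫ m = 0 → φ = 0

lemma mor₁_dmono {D : Set C} {x y z₃ : C} {i : x ⟶ y} {p : y ⟶ z₃} {h : z₃ ⟶ x⟦(1 : ℤ)⟧}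
    (hT : Triangle.mk i p h ∈ distTriang C) (hz₃ : z₃⟦(-1 : ℤ)⟧ ∈ perpSet C D) :
    Dmono D i := by
  intro z hz φ hφ
  obtain ⟨g, hg⟩ := Triangle.coyoneda_exact₂ _ (inv_rot_of_distTriang _ hT) φ hφ
  rw [hg, hz₃ z hz g]; exact zero_comp

/-- The cone of a `D`-mono between heart objects lies in the heart. -/
lemma cone_mem_A {D : Set C} (hD : IsTStructure C D) {e a c' : C} {m : e ⟶ a} {n : a ⟶ c'}
    {o : c' ⟶ e⟦(1 : ℤ)⟧} (hT : Triangle.mk m n o ∈ distTriang C)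
    (he : e ∈ heartSet C D) (ha : a ∈ heartSet C D) (hm : Dmono D m) :
    c' ∈ heartSet C D := by
  constructor
  · apply mem_D_of_perp hD
    intro y hy φ
    obtain ⟨ψ, hψ⟩ := Triangle.yoneda_exact₂ _ (rot_of_distTriang _ hT) φ (hy a ha.1 _)
    rw [hψ, V1 he.1 (perp_neg hD hy) ψ]; exact comp_zero
  · intro z hz φ
    obtain ⟨w, δ, u, hT2, hδ⟩ := fib_shift hT
    have hδ' : δ ≫ m = 0 := hδ
    have h2 : φ ≫ δ = 0 := hm z hz _ ((assoc φ δ m).trans ((congrArg (fun t => φ ≫ t) hδ').trans comp_zero))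
    obtain ⟨g, hg⟩ := Triangle.coyoneda_exact₂ _ hT2 φ h2
    rw [hg, ha.2 z hz g]; exact zero_comp

/-- A nonzero map out of a simple heart object is a `D`-mono. -/
lemma simple_dmono {D : Set C} (hD : IsTStructure C D) {σ x : C}
    (hσ : SimpleIn C (heartSet C D) σ) (hx : x ∈ heartSet C D)
    {φ : σ ⟶ x} (hφ : φ ≠ 0) : Dmono D φ := by
  obtain ⟨G, f, h, hT⟩ := distinguished_cocone_triangle₁ φ
  have hG : G⟦(-1 : ℤ)⟧ ∈ perpSet C D := by
    intro z hz ρ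
    obtain ⟨g, hg⟩ := Triangle.coyoneda_exact₂ _
      (inv_rot_of_distTriang _ (inv_rot_of_distTriang _ (inv_rot_of_distTriang _
        (inv_rot_of_distTriang _ hT)))) ρ (hσ.1.2 z hz _)
    rw [hg, perp_neg hD hx.2 z hz g]; exact zero_comp
  obtain ⟨K, G', ι, βK, γK, hT6, hKA, hG'⟩ := truncGood hD hG
  have hκ : Dmono D (ι ≫ f) := by
    intro z hz ψ hψ
    obtain ⟨g, hg⟩ := Triangle.coyoneda_exact₂ _ (inv_rot_of_distTriang _ hT) (ψ ≫ ι)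
      (by exact (assoc _ _ _).trans hψ)
    have hzero : ψ ≫ ι = 0 := by refine hg.trans ?_; rw [hx.2 z hz g]; exact zero_comp
    obtain ⟨g₂, hg₂⟩ := Triangle.coyoneda_exact₂ _ (inv_rot_of_distTriang _ hT6) ψ hzero
    rw [hg₂, perp_neg hD hG' z hz g₂]; exact zero_comp
  obtain ⟨cκ, n2, o2, hT7⟩ := distinguished_cocone_triangle (ι ≫ f)
  have hcκ : cκ ∈ heartSet C D := cone_mem_A hD hT7 hKA hσ.1 hκ
  rcases hσ.2.2 K cκ (heartTriangle_mk hKA hσ.1 hcκ hT7) with hK | hcκ0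
  · intro z hz ρ hρ
    obtain ⟨g, hg⟩ := Triangle.coyoneda_exact₂ _ hT ρ hρ
    have hgβ : g ≫ βK = 0 := hG' z hz _
    obtain ⟨g₃, hg₃⟩ := Triangle.coyoneda_exact₂ _ hT6 g hgβ
    rw [hg, hg₃, hK.eq_of_tgt g₃ 0]; exact (congrArg (fun t => t ≫ _) zero_comp).trans zero_comp
  · exfalso
    have hiso : IsIso (ι ≫ f) := (Triangle.isZero₃_iff_isIso₁ _ hT7).1 hcκ0
    have hfφ : f ≫ φ = 0 := comp_distTriang_mor_zero₁₂ _ hT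
    have h0 : (ι ≫ f) ≫ φ = 0 := by rw [assoc, hfφ, comp_zero]
    apply hφ
    calc φ = inv (ι ≫ f) ≫ ((ι ≫ f) ≫ φ) := by simp
    _ = 0 := by rw [h0, comp_zero]

/-- Schur: a nonzero map between simple heart objects is an isomorphism. -/
lemma schur {D : Set C} (hD : IsTStructure C D) {σ τ : C}
    (hσ : SimpleIn C (heartSet C D) σ) (hτ : SimpleIn C (heartSet C D) τ)
    {χ : σ ⟶ τ} (hχ : χ ≠ 0) : IsIso χ := by
  have hd := simple_dmono hD hσ hτ.1 hχ
  obtain ⟨cχ, n, o, hT⟩ := distinguished_cocone_triangle χ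
  have hc : cχ ∈ heartSet C D := cone_mem_A hD hT hσ.1 hτ.1 hd
  rcases hτ.2.2 σ cχ (heartTriangle_mk hσ.1 hτ.1 hc hT) with h | h
  · exact absurd h hσ.2.1
  · exact (Triangle.isZero₃_iff_isIso₁ _ hT).1 h


/-- A cone on isomorphic bases is isomorphic. -/
lemma cone_iso_of_iso₁ {x x' a q q' : C} {i : x ⟶ a} {p : a ⟶ q} {h : q ⟶ x⟦(1 : ℤ)⟧}
    {i' : x' ⟶ a} {p' : a ⟶ q'} {h' : q' ⟶ x'⟦(1 : ℤ)⟧}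
    (hT : Triangle.mk i p h ∈ distTriang C) (hT' : Triangle.mk i' p' h' ∈ distTriang C)
    (χ : x' ≅ x) (hcomm : χ.hom ≫ i = i') : Nonempty (q' ≅ q) := by
  obtain ⟨w, hw1, hw2⟩ := complete_distinguished_triangle_morphism _ _ hT' hT χ.hom (𝟙 a)
    (by exact (comp_id _).trans hcomm.symm)
  let φ : Triangle.mk i' p' h' ⟶ Triangle.mk i p h :=
    { hom₁ := χ.hom
      hom₂ := 𝟙 a
      hom₃ := w
      comm₁ := by exact (comp_id _).trans hcomm.symm
      comm₂ := hw1
      comm₃ := hw2 }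
  have : IsIso φ.hom₃ := isIso₃_of_isIso₁₂ φ hT' hT (by exact Iso.isIso_hom χ)
    (by exact IsIso.id a)
  exact ⟨@asIso _ _ _ _ w this⟩

/-- Emulated Noether isomorphism `(a/s')/σ₀ ≅ (a/σ₀)/s'`. -/
lemma noether {s' σ₀ a a₂ q₀ qb cb : C}
    {ψ : s' ⟶ a} {π₂ : a ⟶ a₂} {o₂ : a₂ ⟶ s'⟦(1 : ℤ)⟧}
    (hT1 : Triangle.mk ψ π₂ o₂ ∈ distTriang C)
    {i₀ : σ₀ ⟶ a} {p₀ : a ⟶ q₀} {h₀ : q₀ ⟶ σ₀⟦(1 : ℤ)⟧}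
    (hT2 : Triangle.mk i₀ p₀ h₀ ∈ distTriang C)
    {ψb : s' ⟶ q₀} {πq : q₀ ⟶ qb} {oq : qb ⟶ s'⟦(1 : ℤ)⟧}
    (hT3 : Triangle.mk ψb πq oq ∈ distTriang C) (hψb : ψb = ψ ≫ p₀)
    {ib : σ₀ ⟶ a₂} {πc : a₂ ⟶ cb} {oc : cb ⟶ σ₀⟦(1 : ℤ)⟧}
    (hT4 : Triangle.mk ib πc oc ∈ distTriang C) (hib : ib = i₀ ≫ π₂)
    (v1 : ∀ φ : σ₀⟦(1 : ℤ)⟧ ⟶ qb, φ = 0) (v2 : ∀ φ : s'⟦(1 : ℤ)⟧ ⟶ qb, φ = 0)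
    (v3 : ∀ φ : s'⟦(1 : ℤ)⟧ ⟶ cb, φ = 0) (v4 : ∀ φ : σ₀⟦(1 : ℤ)⟧ ⟶ cb, φ = 0) :
    Nonempty (qb ≅ cb) := by
  have c1 : ψ ≫ π₂ = 0 := comp_distTriang_mor_zero₁₂ _ hT1
  have c2 : i₀ ≫ p₀ = 0 := comp_distTriang_mor_zero₁₂ _ hT2
  have c3 : ψb ≫ πq = 0 := comp_distTriang_mor_zero₁₂ _ hT3
  have c4 : ib ≫ πc = 0 := comp_distTriang_mor_zero₁₂ _ hT4
  obtain ⟨g₁, hg₁0⟩ : ∃ g : q₀ ⟶ cb, π₂ ≫ πc = p₀ ≫ g := Triangle.yoneda_exact₂ _ hT2 (π₂ ≫ πc)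
    (by show i₀ ≫ π₂ ≫ πc = 0; rw [← assoc, ← hib, c4])
  have hg₁ : π₂ ≫ πc = p₀ ≫ g₁ := hg₁0
  obtain ⟨ϑ1, hϑ0⟩ := Triangle.yoneda_exact₂ _ hT3 g₁
    (by show ψb ≫ g₁ = 0; rw [hψb, assoc, ← hg₁, ← assoc, c1, zero_comp])
  let ϑ : qb ⟶ cb := ϑ1
  have hϑ : g₁ = πq ≫ ϑ := hϑ0
  obtain ⟨g₂, hg₂0⟩ : ∃ g : a₂ ⟶ qb, p₀ ≫ πq = π₂ ≫ g := Triangle.yoneda_exact₂ _ hT1 (p₀ ≫ πq)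
    (by show ψ ≫ p₀ ≫ πq = 0; rw [← assoc, ← hψb, c3])
  have hg₂ : p₀ ≫ πq = π₂ ≫ g₂ := hg₂0
  obtain ⟨ϑ'1, hϑ'0⟩ := Triangle.yoneda_exact₂ _ hT4 g₂
    (by show ib ≫ g₂ = 0; rw [hib, assoc, ← hg₂, ← assoc, c2, zero_comp])
  let ϑ' : cb ⟶ qb := ϑ'1
  have hϑ' : g₂ = πc ≫ ϑ' := hϑ'0
  have key1 : p₀ ≫ πq ≫ ϑ ≫ ϑ' = p₀ ≫ πq := by
    calc p₀ ≫ πq ≫ ϑ ≫ ϑ' = p₀ ≫ (πq ≫ ϑ) ≫ ϑ' := by simp only [assoc]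
    _ = (p₀ ≫ g₁) ≫ ϑ' := by rw [← hϑ, assoc]
    _ = π₂ ≫ (πc ≫ ϑ') := by rw [← hg₁, assoc]
    _ = p₀ ≫ πq := by rw [← hϑ', ← hg₂]
  have hE : p₀ ≫ (πq ≫ (ϑ ≫ ϑ') - πq) = 0 := by
    rw [Preadditive.comp_sub, sub_eq_zero]
    exact key1
  obtain ⟨u, hu0⟩ := Triangle.yoneda_exact₃ _ hT2 _ hE
  have hu : πq ≫ (ϑ ≫ ϑ') - πq = h₀ ≫ u := hu0
  have hF : πq ≫ (ϑ ≫ ϑ' - 𝟙 qb) = 0 := by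
    rw [Preadditive.comp_sub, comp_id]
    rw [hu, v1 u, comp_zero]
  obtain ⟨w, hw0⟩ := Triangle.yoneda_exact₃ _ hT3 _ hF
  have hw : ϑ ≫ ϑ' - 𝟙 qb = oq ≫ w := hw0
  have id1 : ϑ ≫ ϑ' = 𝟙 qb := by
    have h5 : ϑ ≫ ϑ' - 𝟙 qb = 0 := by rw [hw, v2 w, comp_zero]
    rwa [sub_eq_zero] at h5
  have key2 : π₂ ≫ πc ≫ ϑ' ≫ ϑ = π₂ ≫ πc := by
    calc π₂ ≫ πc ≫ ϑ' ≫ ϑ = π₂ ≫ (πc ≫ ϑ') ≫ ϑ := by simp only [assoc]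
    _ = (π₂ ≫ g₂) ≫ ϑ := by rw [← hϑ', assoc]
    _ = p₀ ≫ (πq ≫ ϑ) := by rw [← hg₂, assoc]
    _ = π₂ ≫ πc := by rw [← hϑ, ← hg₁]
  have hE2 : π₂ ≫ (πc ≫ (ϑ' ≫ ϑ) - πc) = 0 := by
    rw [Preadditive.comp_sub, sub_eq_zero]
    exact key2
  obtain ⟨u2, hu20⟩ := Triangle.yoneda_exact₃ _ hT1 _ hE2
  have hu2 : πc ≫ (ϑ' ≫ ϑ) - πc = o₂ ≫ u2 := hu20
  have hF2 : πc ≫ (ϑ' ≫ ϑ - 𝟙 cb) = 0 := by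
    rw [Preadditive.comp_sub, comp_id]
    rw [hu2, v3 u2, comp_zero]
  obtain ⟨w2, hw20⟩ := Triangle.yoneda_exact₃ _ hT4 _ hF2
  have hw2 : ϑ' ≫ ϑ - 𝟙 cb = oc ≫ w2 := hw20
  have id2 : ϑ' ≫ ϑ = 𝟙 cb := by
    have h5 : ϑ' ≫ ϑ - 𝟙 cb = 0 := by rw [hw2, v4 w2, comp_zero]
    rwa [sub_eq_zero] at h5
  exact ⟨⟨ϑ, ϑ', id1, id2⟩⟩

/-- Bounded-length predicate in the heart. -/
inductive LenLE (A : Set C) : C → ℕ → Prop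
  | zero {a : C} {n : ℕ} (h : IsZero a) : LenLE A a n
  | step {σ a q : C} {n : ℕ} (hσ : SimpleIn C A σ) (ht : heartTriangle C A σ a q)
      (hq : LenLE A q n) : LenLE A a (n + 1)

lemma exists_lenLE {A : Set C} {a : C} (h : FiniteLengthIn C A a) : ∃ n, LenLE A a n := by
  induction h with
  | zero h => exact ⟨0, .zero h⟩
  | step hσ hq ht ih =>
    obtain ⟨n, hn⟩ := ih
    exact ⟨n + 1, .step hσ ht hn⟩

lemma lenLE_zero {A : Set C} {a : C} (h : LenLE A a 0) : IsZero a := by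
  cases h with
  | zero h => exact h

lemma lenLE_iso {D : Set C} (hD : IsTStructure C D) {x y : C} {n : ℕ} (e : x ≅ y)
    (h : LenLE (heartSet C D) x n) : LenLE (heartSet C D) y n := by
  cases h with
  | zero h => exact .zero (h.of_iso e.symm)
  | step hσ ht hq =>
    obtain ⟨h1, h2, h3, i, p, hh, hT⟩ := ht
    have hT' : Triangle.mk (i ≫ e.hom) (e.inv ≫ p) hh ∈ distTriang C := by
      refine isomorphic_distinguished _ hT _ ?_
      refine Triangle.isoMk _ _ (Iso.refl _) e.symm (Iso.refl _) ?_ ?_ ?_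
      · show (i ≫ e.hom) ≫ e.inv = 𝟙 _ ≫ i
        rw [assoc, e.hom_inv_id, comp_id, id_comp]
      · show (e.inv ≫ p) ≫ 𝟙 _ = e.inv ≫ p
        rw [comp_id]
      · show hh ≫ (shiftFunctor C 1).map (𝟙 _) = 𝟙 _ ≫ hh
        simp
    exact .step hσ (heartTriangle_mk h1 (A_iso hD e h2) h3 hT') hq


lemma T_sub_A {D : Set C} {s x : C} (hsA : s ∈ heartSet C D)
    (h : HeartExt C (heartSet C D) {s} x) : x ∈ heartSet C D := by
  induction h with
  | of h =>
    obtain rfl : _ = s := h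
    exact hsA
  | zero h hA => exact hA
  | iso e hy h ih => exact hy
  | ext ht hf h ih1 ih2 => exact h.2.1

lemma homT_zero {D : Set C} {s y : C} (hy : ∀ φ : s ⟶ y, φ = 0) :
    ∀ τ, HeartExt C (heartSet C D) {s} τ → ∀ φ : τ ⟶ y, φ = 0 := by
  intro τ hτ
  induction hτ with
  | of h =>
    obtain rfl : _ = s := h
    exact hy
  | zero h hA => exact fun φ => h.eq_of_src φ 0
  | iso e hy' h ih =>
    intro φ
    have h2 := ih (e.hom ≫ φ)
    calc φ = e.inv ≫ (e.hom ≫ φ) := by simp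
    _ = 0 := by rw [h2, comp_zero]
  | ext ht hf h ih1 ih2 =>
    obtain ⟨h1, h2, h3, i, p, hh, hT⟩ := h
    intro φ
    obtain ⟨ψ, hψ⟩ := Triangle.yoneda_exact₂ _ hT φ (ih1 _)
    rw [hψ, ih2 ψ]; exact comp_zero

lemma mem_F_of_homs_zero {D : Set C} {s a : C} (ha : a ∈ heartSet C D)
    (h : ∀ φ : s ⟶ a, φ = 0) :
    a ∈ perpIn C (heartSet C D) {c | HeartExt C (heartSet C D) {s} c} :=
  ⟨ha, fun t ht φ => homT_zero h t ht φ⟩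

lemma F_iso {D : Set C} (hD : IsTStructure C D) {T' : Set C} {x y : C} (e : x ≅ y)
    (hx : x ∈ perpIn C (heartSet C D) T') : y ∈ perpIn C (heartSet C D) T' := by
  refine ⟨A_iso hD e hx.1, fun t ht φ => ?_⟩
  have h2 := hx.2 t ht (φ ≫ e.inv)
  calc φ = (φ ≫ e.inv) ≫ e.hom := by simp
  _ = 0 := by rw [h2, zero_comp]

lemma quot_inherit {D : Set C} {T' : Set C} {x a q : C} {i : x ⟶ a} {p : a ⟶ q}
    {hh : q ⟶ x⟦(1 : ℤ)⟧} (hT : Triangle.mk i p hh ∈ distTriang C) (hx : x ∈ D)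
    (ha : ∀ y ∈ perpIn C (heartSet C D) T', ∀ ξ : a ⟶ y, ξ = 0) :
    ∀ y ∈ perpIn C (heartSet C D) T', ∀ ξ : q ⟶ y, ξ = 0 := by
  intro y hy ξ
  obtain ⟨ψ, hψ⟩ := Triangle.yoneda_exact₃ _ hT ξ (ha y hy _)
  rw [hψ, V1 hx hy.1.2 ψ]; exact comp_zero

/-- Quotienting by a simple subobject decreases the length bound. -/
lemma lenQuotS {D : Set C} (hD : IsTStructure C D) {s' : C}
    (hs' : SimpleIn C (heartSet C D) s') :
    ∀ (n : ℕ) (a a₂ : C), a ∈ heartSet C D → a₂ ∈ heartSet C D →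
    LenLE (heartSet C D) a (n + 1) →
    ∀ (ψ : s' ⟶ a) (π₂ : a ⟶ a₂) (o₂ : a₂ ⟶ s'⟦(1 : ℤ)⟧),
    Triangle.mk ψ π₂ o₂ ∈ (distTriang C) → ψ ≠ 0 → LenLE (heartSet C D) a₂ n := by
  intro n
  induction n using Nat.strong_induction_on with
  | _ n ih =>
    intro a a₂ haA ha₂A hlen ψ π₂ o₂ hT1 hψ
    cases hlen with
    | zero h => exact absurd (h.eq_of_tgt ψ 0) hψ
    | @step σ₀ _ q₀ _ hσ₀ ht hq =>
      obtain ⟨hσ₀A, _, hq₀A, i₀, p₀, h₀, hT2⟩ := ht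
      by_cases hψb0 : ψ ≫ p₀ = 0
      · obtain ⟨χ, hχ0⟩ := Triangle.coyoneda_exact₂ _ hT2 ψ hψb0
        have hχ : ψ = χ ≫ i₀ := hχ0
        have hχne : χ ≠ 0 := fun h0 => hψ (by rw [hχ, h0]; exact zero_comp)
        have hχiso := schur hD hs' hσ₀ hχne
        obtain ⟨eiso⟩ := cone_iso_of_iso₁ hT2 hT1 (asIso χ) hχ.symm
        exact lenLE_iso hD eiso.symm hq
      · have hψbD : Dmono D (ψ ≫ p₀) := simple_dmono hD hs' hq₀A hψb0
        obtain ⟨qb, πq, oq, hT3⟩ := distinguished_cocone_triangle (ψ ≫ p₀)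
        have hqbA : qb ∈ heartSet C D := cone_mem_A hD hT3 hs'.1 hq₀A hψbD
        cases n with
        | zero => exact absurd ((lenLE_zero hq).eq_of_tgt (ψ ≫ p₀) 0) hψb0
        | succ m =>
          have hqb_len : LenLE (heartSet C D) qb m :=
            ih m (Nat.lt_succ_self m) q₀ qb hq₀A hqbA hq (ψ ≫ p₀) πq oq hT3 hψb0
          by_cases hibar0 : i₀ ≫ π₂ = 0
          · obtain ⟨χ', hχ'0⟩ := Triangle.coyoneda_exact₂ _ hT1 i₀ hibar0
            have hχ' : i₀ = χ' ≫ ψ := hχ'0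
            have hne : χ' ≠ 0 := by
              intro h0
              have hz : i₀ = 0 := by rw [hχ', h0]; exact zero_comp
              have hd : Dmono D i₀ := mor₁_dmono hT2 hq₀A.2
              have h1 := hd σ₀ hσ₀.1.1 (𝟙 σ₀) (by rw [id_comp, hz])
              exact hσ₀.2.1 (by rw [IsZero.iff_id_eq_zero]; exact h1)
            have : IsIso χ' := schur hD hσ₀ hs' hne
            obtain ⟨eiso⟩ := cone_iso_of_iso₁ hT1 hT2 (@asIso _ _ _ _ χ' this) hχ'.symm
            exact lenLE_iso hD eiso hq
          · have hibarD : Dmono D (i₀ ≫ π₂) := simple_dmono hD hσ₀ ha₂A hibar0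
            obtain ⟨cb, πc, oc, hT4⟩ := distinguished_cocone_triangle (i₀ ≫ π₂)
            have hcbA : cb ∈ heartSet C D := cone_mem_A hD hT4 hσ₀.1 ha₂A hibarD
            obtain ⟨eiso⟩ := noether hT1 hT2 hT3 rfl hT4 rfl
              (fun φ => V1 hσ₀.1.1 hqbA.2 φ) (fun φ => V1 hs'.1.1 hqbA.2 φ)
              (fun φ => V1 hs'.1.1 hcbA.2 φ) (fun φ => V1 hσ₀.1.1 hcbA.2 φ)
            have hcb_len : LenLE (heartSet C D) cb m := lenLE_iso hD eiso hqb_len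
            exact .step hσ₀ (heartTriangle_mk hσ₀.1 ha₂A hcbA hT4) hcb_len


/-- Key lemma: no nonzero torsion-free object `D`-embeds into a heart object all of whose
maps to torsion-free objects vanish. -/
lemma wall {D : Set C} (hD : IsTStructure C D) {s : C}
    (hs : SimpleIn C (heartSet C D) s) :
    ∀ (n : ℕ) (a : C), a ∈ heartSet C D → LenLE (heartSet C D) a n →
    (∀ y ∈ perpIn C (heartSet C D) {c | HeartExt C (heartSet C D) {s} c}, ∀ ξ : a ⟶ y, ξ = 0) →
    ∀ e ∈ perpIn C (heartSet C D) {c | HeartExt C (heartSet C D) {s} c},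
    ∀ m : e ⟶ a, Dmono D m → IsZero e := by
  intro n
  induction n using Nat.strong_induction_on with
  | _ n ih =>
    intro a haA hlen hHom e heF m hm
    cases hlen with
    | zero h =>
      have hm0 : m = 0 := h.eq_of_tgt m 0
      have h1 := hm e heF.1.1 (𝟙 e) (by rw [id_comp, hm0])
      rw [IsZero.iff_id_eq_zero]
      exact h1
    | @step σ₀ _ q₀ n' hσ₀ ht hq =>
      obtain ⟨hσ₀A, _, hq₀A, i₀, p₀, h₀, hT2⟩ := ht
      obtain ⟨e₁, j, l, hT5⟩ := distinguished_cocone_triangle₁ (m ≫ p₀)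
      have c12 : j ≫ (m ≫ p₀) = 0 := comp_distTriang_mor_zero₁₂ _ hT5
      obtain ⟨nn, hnn0⟩ := Triangle.coyoneda_exact₂ _ hT2 (j ≫ m)
        (by show (j ≫ m) ≫ p₀ = 0; rw [assoc]; exact c12)
      have hnn : j ≫ m = nn ≫ i₀ := hnn0
      have he₁ : e₁⟦(-1 : ℤ)⟧ ∈ perpSet C D := by
        intro z hz φ
        obtain ⟨g, hg⟩ := Triangle.coyoneda_exact₂ _
          (inv_rot_of_distTriang _ (inv_rot_of_distTriang _ (inv_rot_of_distTriang _
            (inv_rot_of_distTriang _ hT5)))) φ (heF.1.2 z hz _)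
        rw [hg, perp_neg hD hq₀A.2 z hz g]; exact zero_comp
      obtain ⟨K, d₁', ι, βK, γK, hT6, hKA, hd₁'⟩ := truncGood hD he₁
      have hKF : K ∈ perpIn C (heartSet C D) {c | HeartExt C (heartSet C D) {s} c} := by
        refine ⟨hKA, fun τ hτ ψ => ?_⟩
        have hτD : τ ∈ D := (T_sub_A hs.1 hτ).1
        have h1 : (ψ ≫ ι) ≫ j = 0 := by
          have h2 : ψ ≫ (ι ≫ j) = 0 := heF.2 τ hτ _
          rwa [← assoc] at h2
        obtain ⟨g, hg⟩ := Triangle.coyoneda_exact₂ _ (inv_rot_of_distTriang _ hT5) (ψ ≫ ι) h1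
        have h2 : ψ ≫ ι = 0 := by refine hg.trans ?_; rw [hq₀A.2 τ hτD g]; exact zero_comp
        obtain ⟨g₂, hg₂⟩ := Triangle.coyoneda_exact₂ _ (inv_rot_of_distTriang _ hT6) ψ h2
        rw [hg₂, perp_neg hD hd₁' τ hτD g₂]; exact zero_comp
      have hnhat : Dmono D (ι ≫ nn) := by
        intro z hz φ hφ
        have h1 : ((φ ≫ ι) ≫ j) ≫ m = 0 := by
          calc ((φ ≫ ι) ≫ j) ≫ m = φ ≫ ι ≫ (j ≫ m) := by simp only [assoc]
          _ = φ ≫ ι ≫ nn ≫ i₀ := by rw [hnn]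
          _ = (φ ≫ ι ≫ nn) ≫ i₀ := by exact (congrArg (φ ≫ ·) (assoc ι nn i₀).symm).trans (assoc _ _ _).symm
          _ = 0 := by rw [hφ]; exact zero_comp
        have h2 : (φ ≫ ι) ≫ j = 0 := hm z hz _ h1
        obtain ⟨g, hg⟩ := Triangle.coyoneda_exact₂ _ (inv_rot_of_distTriang _ hT5) (φ ≫ ι) h2
        have h3 : φ ≫ ι = 0 := by refine hg.trans ?_; rw [hq₀A.2 z hz g]; exact zero_comp
        obtain ⟨g₂, hg₂⟩ := Triangle.coyoneda_exact₂ _ (inv_rot_of_distTriang _ hT6) φ h3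
        rw [hg₂, perp_neg hD hd₁' z hz g₂]; exact zero_comp
      obtain ⟨cn, n2, o2c, hT7⟩ := distinguished_cocone_triangle (ι ≫ nn)
      have hcnA : cn ∈ heartSet C D := cone_mem_A hD hT7 hKA hσ₀.1 hnhat
      rcases hσ₀.2.2 K cn (heartTriangle_mk hKA hσ₀.1 hcnA hT7) with hKz | hcnz
      · -- K is zero : recurse on q₀
        have hk : Dmono D (m ≫ p₀) := by
          intro z hz φ hφ
          obtain ⟨g, hg⟩ := Triangle.coyoneda_exact₂ _ hT5 φ hφ
          have hgβ : g ≫ βK = 0 := hd₁' z hz _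
          obtain ⟨g₃, hg₃⟩ := Triangle.coyoneda_exact₂ _ hT6 g hgβ
          rw [hg, hg₃, hKz.eq_of_tgt g₃ 0]; exact (congrArg (fun t => t ≫ _) zero_comp).trans zero_comp
        have hHomq := quot_inherit hT2 hσ₀.1.1 hHom
        exact ih n' (Nat.lt_succ_self n') q₀ hq₀A hq hHomq e heF (m ≫ p₀) hk
      · -- the cone is zero, so K ≅ σ₀ and σ₀ is torsion-free: derive a contradiction
        exfalso
        have hiso : IsIso (ι ≫ nn) := (Triangle.isZero₃_iff_isIso₁ _ hT7).1 hcnz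
        have hσ₀F : σ₀ ∈ perpIn C (heartSet C D) {c | HeartExt C (heartSet C D) {s} c} :=
          F_iso hD (@asIso _ _ _ _ (ι ≫ nn) hiso) hKF
        by_cases hsa : ∀ φ : s ⟶ a, φ = 0
        · have haF := mem_F_of_homs_zero haA hsa
          have haz : IsZero a := by
            rw [IsZero.iff_id_eq_zero]
            exact hHom a haF (𝟙 a)
          have hi0 : i₀ = 0 := haz.eq_of_tgt i₀ 0
          have hd : Dmono D i₀ := mor₁_dmono hT2 hq₀A.2
          have h1 := hd σ₀ hσ₀.1.1 (𝟙 σ₀) (by rw [id_comp, hi0])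
          exact hσ₀.2.1 (by rw [IsZero.iff_id_eq_zero]; exact h1)
        · push_neg at hsa
          obtain ⟨ψ, hψ⟩ := hsa
          have hψD : Dmono D ψ := simple_dmono hD hs haA hψ
          obtain ⟨a₂, π₂, o₂a, hT1⟩ := distinguished_cocone_triangle ψ
          have ha₂A : a₂ ∈ heartSet C D := cone_mem_A hD hT1 hs.1 haA hψD
          have hHa₂ := quot_inherit hT1 hs.1.1 hHom
          have hlen₂ : LenLE (heartSet C D) a₂ n' :=
            lenQuotS hD hs n' a a₂ haA ha₂A (.step hσ₀ (heartTriangle_mk hσ₀.1 haA hq₀A hT2) hq)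
              ψ π₂ o₂a hT1 hψ
          by_cases hibar0 : i₀ ≫ π₂ = 0
          · obtain ⟨χ, hχ0⟩ := Triangle.coyoneda_exact₂ _ hT1 i₀ hibar0
            have hχ : i₀ = χ ≫ ψ := hχ0
            have hne : χ ≠ 0 := by
              intro h0
              have hz : i₀ = 0 := by rw [hχ, h0]; exact zero_comp
              have hd : Dmono D i₀ := mor₁_dmono hT2 hq₀A.2
              have h1 := hd σ₀ hσ₀.1.1 (𝟙 σ₀) (by rw [id_comp, hz])
              exact hσ₀.2.1 (by rw [IsZero.iff_id_eq_zero]; exact h1)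
            have hχiso : IsIso χ := schur hD hσ₀ hs hne
            have hsF := F_iso hD (asIso χ) hσ₀F
            have : IsZero s := by
              rw [IsZero.iff_id_eq_zero]
              exact hsF.2 s (HeartExt.of rfl) (𝟙 s)
            exact hs.2.1 this
          · have hibarD : Dmono D (i₀ ≫ π₂) := simple_dmono hD hσ₀ ha₂A hibar0
            exact hσ₀.2.1
              (ih n' (Nat.lt_succ_self n') a₂ ha₂A hlen₂ hHa₂ σ₀ hσ₀F (i₀ ≫ π₂) hibarD)


lemma L_bounds {D : Set C} (hD : IsTStructure C D) {s : C} (hsA : s ∈ heartSet C D) {x : C}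
    (hx : ExtClosure C (perpIn C (heartSet C D) {c | HeartExt C (heartSet C D) {s} c} ∪
      shiftSet C {c | HeartExt C (heartSet C D) {s} c} (-1)) x) :
    x⟦(1 : ℤ)⟧ ∈ D ∧ x⟦(-1 : ℤ)⟧ ∈ perpSet C D := by
  induction hx with
  | @of c h =>
    rcases h with hF | hT
    · exact ⟨hD.shift_mem _ hF.1.1, hF.1.2⟩
    · have hT2 : c⟦(-(-1) : ℤ)⟧ ∈ {c | HeartExt C (heartSet C D) {s} c} := hT
      have he : (-(-1 : ℤ)) = (1 : ℤ) := by norm_num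
      rw [he] at hT2
      have hx1A : c⟦(1 : ℤ)⟧ ∈ heartSet C D := T_sub_A hsA hT2
      refine ⟨hx1A.1, ?_⟩
      have h2 : c ∈ perpSet C D :=
        perp_iso ((shiftFunctorCompIsoId C (1 : ℤ) (-1) (by norm_num)).app c) hx1A.2
      exact perp_neg hD h2
  | zero h =>
    exact ⟨zero_mem_D hD (shift_isZero h _), fun d _ φ => (shift_isZero h _).eq_of_tgt φ 0⟩
  | iso e h ih =>
    exact ⟨hD.isoClosed ((shiftFunctor C (1 : ℤ)).mapIso e) ih.1,
      perp_iso ((shiftFunctor C (-1 : ℤ)).mapIso e) ih.2⟩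
  | ext f g hcomm hT ha hc iha ihc =>
    constructor
    · exact D_ext hD (rot_of_distTriang _ (rot_of_distTriang _ (rot_of_distTriang _ hT)))
        iha.1 ihc.1
    · exact perp_ext (inv_rot_of_distTriang _ (inv_rot_of_distTriang _
        (inv_rot_of_distTriang _ hT))) iha.2 ihc.2

lemma homT_L_zero {D : Set C} (hD : IsTStructure C D) {s : C} (hsA : s ∈ heartSet C D) {x : C}
    (hx : ExtClosure C (perpIn C (heartSet C D) {c | HeartExt C (heartSet C D) {s} c} ∪
      shiftSet C {c | HeartExt C (heartSet C D) {s} c} (-1)) x) :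
    ∀ τ, HeartExt C (heartSet C D) {s} τ → ∀ φ : τ ⟶ x, φ = 0 := by
  induction hx with
  | @of c h =>
    rcases h with hF | hT'
    · exact fun τ hτ φ => hF.2 τ hτ φ
    · intro τ hτ φ
      have hT2 : c⟦(-(-1) : ℤ)⟧ ∈ {c | HeartExt C (heartSet C D) {s} c} := hT'
      have he : (-(-1 : ℤ)) = (1 : ℤ) := by norm_num
      rw [he] at hT2
      have hx1A := T_sub_A hsA hT2
      have h2 : c ∈ perpSet C D :=
        perp_iso ((shiftFunctorCompIsoId C (1 : ℤ) (-1) (by norm_num)).app c) hx1A.2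
      exact h2 τ (T_sub_A hsA hτ).1 φ
  | zero h => exact fun τ hτ φ => h.eq_of_tgt φ 0
  | iso e h ih =>
    intro τ hτ φ
    have h2 := ih τ hτ (φ ≫ e.inv)
    calc φ = (φ ≫ e.inv) ≫ e.hom := by simp
    _ = 0 := by rw [h2, zero_comp]
  | ext f g hcomm hT ha hc iha ihc =>
    intro τ hτ φ
    obtain ⟨ψ, hψ⟩ := Triangle.coyoneda_exact₂ _ hT φ (ihc τ hτ _)
    rw [hψ, iha τ hτ ψ]; exact zero_comp

lemma homL1_F_zero {D : Set C} (hD : IsTStructure C D) {s : C} (hsA : s ∈ heartSet C D) {x : C}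
    (hx : ExtClosure C (perpIn C (heartSet C D) {c | HeartExt C (heartSet C D) {s} c} ∪
      shiftSet C {c | HeartExt C (heartSet C D) {s} c} (-1)) x) :
    ∀ y ∈ perpIn C (heartSet C D) {c | HeartExt C (heartSet C D) {s} c},
    ∀ φ : x⟦(1 : ℤ)⟧ ⟶ y, φ = 0 := by
  induction hx with
  | @of c h =>
    rcases h with hF | hT'
    · exact fun y hy φ => V1 hF.1.1 hy.1.2 φ
    · intro y hy φ
      have hT2 : c⟦(-(-1) : ℤ)⟧ ∈ {c | HeartExt C (heartSet C D) {s} c} := hT'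
      have he : (-(-1 : ℤ)) = (1 : ℤ) := by norm_num
      rw [he] at hT2
      exact hy.2 _ hT2 φ
  | zero h => exact fun y hy φ => (shift_isZero h 1).eq_of_src φ 0
  | iso e h ih =>
    intro y hy φ
    have h2 := ih y hy ((shiftFunctor C (1 : ℤ)).map e.hom ≫ φ)
    calc φ = (shiftFunctor C (1 : ℤ)).map e.inv ≫ ((shiftFunctor C (1 : ℤ)).map e.hom ≫ φ) := by
          rw [← assoc, ← Functor.map_comp, e.inv_hom_id, CategoryTheory.Functor.map_id, id_comp]
    _ = 0 := by rw [h2, comp_zero]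
  | ext f g hcomm hT ha hc iha ihc =>
    intro y hy φ
    obtain ⟨ψ, hψ⟩ := Triangle.yoneda_exact₂ _
      (rot_of_distTriang _ (rot_of_distTriang _ (rot_of_distTriang _ hT))) φ (iha y hy _)
    rw [hψ, ihc y hy ψ]; exact comp_zero


lemma dist_iso_mid {x y t f : C} (e : x ≅ y) {i : t ⟶ x} {p : x ⟶ f} {hh : f ⟶ t⟦(1 : ℤ)⟧}
    (hT : Triangle.mk i p hh ∈ distTriang C) :
    Triangle.mk (i ≫ e.hom) (e.inv ≫ p) hh ∈ distTriang C := by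
  refine isomorphic_distinguished _ hT _ ?_
  refine Triangle.isoMk _ _ (Iso.refl _) e.symm (Iso.refl _) ?_ ?_ ?_
  · show (i ≫ e.hom) ≫ e.inv = 𝟙 _ ≫ i
    rw [assoc, e.hom_inv_id, comp_id, id_comp]
  · show (e.inv ≫ p) ≫ 𝟙 _ = e.inv ≫ p
    rw [comp_id]
  · show hh ≫ (shiftFunctor C 1).map (𝟙 _) = 𝟙 _ ≫ hh
    simp

lemma simple_iso {S : Set C} {x y : C} (e : x ≅ y) (hx : x ∈ S)
    (hy : SimpleIn C S y) : SimpleIn C S x := by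
  refine ⟨hx, fun h => hy.2.1 (h.of_iso e.symm), fun t f ht => ?_⟩
  obtain ⟨h1, h2, h3, i, p, hh, hT⟩ := ht
  exact hy.2.2 t f (heartTriangle_mk h1 hy.1 h3 (dist_iso_mid e hT))

end Aux

/-- For a simple object `s` of a finite-length heart `A`, with `⟨s⟩` the
extension closure of `{s}` in `A`, the object `s[-1]` is simple in the left tilt
`L_s A = ⟨⟨s⟩^⊥, ⟨s⟩[-1]⟩`, and every other simple object of `L_s A` lies in `⟨s⟩^⊥`. -/
theorem simple_tilt_simples (D : Set C) (hD : IsTStructure C D) (hDb : IsBounded C D)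
    (hfl : ∀ a ∈ heartSet C D, FiniteLengthIn C (heartSet C D) a)
    (s : C) (hs : SimpleIn C (heartSet C D) s) :
    SimpleIn C
      (leftTilt C (heartSet C D) {c : C | HeartExt C (heartSet C D) {s} c})
      (s⟦(-1 : ℤ)⟧) ∧
    ∀ x : C,
      SimpleIn C
        (leftTilt C (heartSet C D) {c : C | HeartExt C (heartSet C D) {s} c}) x →
      Nonempty (x ≅ s⟦(-1 : ℤ)⟧) ∨
        x ∈ perpIn C (heartSet C D) {c : C | HeartExt C (heartSet C D) {s} c} := by
  have compIsoNP := shiftFunctorCompIsoId C (-1 : ℤ) (1 : ℤ) (by norm_num)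
  have compIsoPN := shiftFunctorCompIsoId C (1 : ℤ) (-1 : ℤ) (by norm_num)
  have henegneg : (-(-1 : ℤ)) = (1 : ℤ) := by norm_num
  -- membership of s⟦-1⟧ in the tilt
  have hsm : s⟦(-1 : ℤ)⟧ ∈ leftTilt C (heartSet C D) {c : C | HeartExt C (heartSet C D) {s} c} := by
    apply ExtClosure.of
    right
    show s⟦(-1 : ℤ)⟧⟦(-(-1) : ℤ)⟧ ∈ {c : C | HeartExt C (heartSet C D) {s} c}
    rw [henegneg]
    have e : s ≅ s⟦(-1 : ℤ)⟧⟦(1 : ℤ)⟧ := (compIsoNP.app s).symm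
    exact HeartExt.iso e (A_iso hD e hs.1) (HeartExt.of rfl)
  -- Part 1 (c): simplicity of s⟦-1⟧ in the tilt
  have part1c : ∀ t f : C,
      heartTriangle C (leftTilt C (heartSet C D) {c : C | HeartExt C (heartSet C D) {s} c})
        t (s⟦(-1 : ℤ)⟧) f → IsZero t ∨ IsZero f := by
    intro t f ht
    obtain ⟨htL, hmidL, hfL, u, v, w, hTT⟩ := ht
    have htb := L_bounds hD hs.1 htL
    have hfb := L_bounds hD hs.1 hfL
    -- truncate t; its heart part vanishes
    obtain ⟨Kt, dt', α, β, γ, hTt, hKtA, hdt'⟩ := truncGood hD htb.2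
    have hαu : α ≫ u = 0 := hs.1.2 Kt hKtA.1 (α ≫ u)
    have hα : α = 0 := by
      obtain ⟨χ, hχ⟩ := Triangle.coyoneda_exact₂ _ (inv_rot_of_distTriang _ hTT) α hαu
      rw [hχ, hfb.2 Kt hKtA.1 χ]; exact zero_comp
    have hKtz : IsZero Kt := by
      obtain ⟨r, hr⟩ := Triangle.coyoneda_exact₃ _ (rot_of_distTriang _ hTt)
        (𝟙 (Kt⟦(1 : ℤ)⟧)) (by show 𝟙 _ ≫ (-(shiftFunctor C (1 : ℤ)).map α) = 0; rw [hα, Functor.map_zero, neg_zero, comp_zero])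
      have hr0 : r = 0 := hdt' _ (hD.shift_mem _ hKtA.1) r
      have hid : 𝟙 (Kt⟦(1 : ℤ)⟧) = 0 := by rw [hr, hr0]; exact zero_comp
      exact isZero_of_shift _ (by rw [IsZero.iff_id_eq_zero]; exact hid)
    have hβiso : IsIso β := (Triangle.isZero₁_iff_isIso₂ _ hTt).1 hKtz
    have ha' : dt'⟦(1 : ℤ)⟧ ∈ heartSet C D := truncUpper hD hTt hKtA.1 hdt' htb.1
    have haA : t⟦(1 : ℤ)⟧ ∈ heartSet C D :=
      A_iso hD ((shiftFunctor C (1 : ℤ)).mapIso (asIso β)).symm ha'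
    -- truncate f
    obtain ⟨ee, ee', α', β', γ', hTf, heA, he'⟩ := truncGood hD hfb.2
    have hbA : ee'⟦(1 : ℤ)⟧ ∈ heartSet C D := truncUpper hD hTf heA.1 he' hfb.1
    have heF : ee ∈ perpIn C (heartSet C D) {c : C | HeartExt C (heartSet C D) {s} c} := by
      refine ⟨heA, fun τ hτ ψ => ?_⟩
      have h1 : ψ ≫ α' = 0 := homT_L_zero hD hs.1 hfL τ hτ (ψ ≫ α')
      obtain ⟨χ₂, hχ₂⟩ := Triangle.coyoneda_exact₂ _ (inv_rot_of_distTriang _ hTf) ψ h1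
      rw [hχ₂, perp_neg hD he' τ (T_sub_A hs.1 hτ).1 χ₂]; exact zero_comp
    have hmD : Dmono D (α' ≫ w) := by
      intro z hz φ hφ
      have h1 : (φ ≫ α') ≫ w = 0 := by rwa [assoc]
      obtain ⟨χ, hχ⟩ := Triangle.coyoneda_exact₂ _ (rot_of_distTriang _ hTT) (φ ≫ α') h1
      have h2 : φ ≫ α' = 0 := by refine hχ.trans ?_; rw [hs.1.2 z hz χ]; exact zero_comp
      obtain ⟨χ₂, hχ₂⟩ := Triangle.coyoneda_exact₂ _ (inv_rot_of_distTriang _ hTf) φ h2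
      rw [hχ₂, perp_neg hD he' z hz χ₂]; exact zero_comp
    have hHom : ∀ y ∈ perpIn C (heartSet C D) {c : C | HeartExt C (heartSet C D) {s} c},
        ∀ ξ : t⟦(1 : ℤ)⟧ ⟶ y, ξ = 0 := fun y hy ξ => homL1_F_zero hD hs.1 htL y hy ξ
    obtain ⟨nlen, hlen⟩ := exists_lenLE (hfl _ haA)
    have hez : IsZero ee := wall hD hs nlen (t⟦(1 : ℤ)⟧) haA hlen hHom ee heF (α' ≫ w) hmD
    have hβ'iso : IsIso β' := (Triangle.isZero₁_iff_isIso₂ _ hTf).1 hez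
    -- shift the defining triangle up by one
    have hTS := Triangle.shift_distinguished _ hTT 1
    set TS := (CategoryTheory.shiftFunctor (Triangle C) (1 : ℤ)).obj (Triangle.mk u v w) with hTSdef
    have e_mid : TS.obj₂ ≅ s := compIsoNP.app s
    have e₃ : TS.obj₃ ≅ ee'⟦(1 : ℤ)⟧ := (shiftFunctor C (1 : ℤ)).mapIso (@asIso _ _ _ _ β' hβ'iso)
    have hT₂ : Triangle.mk (TS.mor₁ ≫ e_mid.hom) (e_mid.inv ≫ TS.mor₂ ≫ e₃.hom)
        (e₃.inv ≫ TS.mor₃) ∈ distTriang C := by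
      refine isomorphic_distinguished _ hTS _ ?_
      refine Triangle.isoMk _ _ (Iso.refl _) e_mid.symm e₃.symm ?_ ?_ ?_
      · show (TS.mor₁ ≫ e_mid.hom) ≫ e_mid.inv = 𝟙 _ ≫ TS.mor₁
        rw [assoc, e_mid.hom_inv_id, comp_id, id_comp]
      · show (e_mid.inv ≫ TS.mor₂ ≫ e₃.hom) ≫ e₃.inv = e_mid.inv ≫ TS.mor₂
        rw [assoc, assoc, e₃.hom_inv_id, comp_id]
      · show (e₃.inv ≫ TS.mor₃) ≫ (shiftFunctor C 1).map (𝟙 _) = e₃.inv ≫ TS.mor₃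
        simp
    have hheart := heartTriangle_mk (A := heartSet C D) haA hs.1 hbA hT₂
    rcases hs.2.2 _ _ hheart with hz | hz
    · exact Or.inl (isZero_of_shift _ hz)
    · refine Or.inr ?_
      have hz' : IsZero ee' := isZero_of_shift _ hz
      exact hz'.of_iso (@asIso _ _ _ _ β' hβ'iso)
  refine ⟨⟨hsm, fun h => hs.2.1 (isZero_of_shift _ h), part1c⟩, ?_⟩
  -- Part 2
  have subT : ∀ τ, HeartExt C (heartSet C D) {s} τ → ∀ x : C, (x⟦(1 : ℤ)⟧ ≅ τ) →
      SimpleIn C (leftTilt C (heartSet C D) {c : C | HeartExt C (heartSet C D) {s} c}) x →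
      Nonempty (x ≅ s⟦(-1 : ℤ)⟧) := by
    intro τ hτ
    induction hτ with
    | @of c h =>
      obtain rfl : c = s := h
      intro x ex hsimp
      exact ⟨(compIsoPN.app x).symm ≪≫ (shiftFunctor C (-1 : ℤ)).mapIso ex⟩
    | @zero c h hA =>
      intro x ex hsimp
      exact (hsimp.2.1 (isZero_of_shift 1 (h.of_iso ex))).elim
    | @iso τ₀ τ' e hy h ih =>
      intro x ex hsimp
      exact ih x (ex ≪≫ e.symm) hsimp
    | @ext τ₁ τ₀ τ₂ ht hf hheart ih1 ih2 =>
      intro x ex hsimp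
      obtain ⟨h1, h2, h3, i, p, hh, hTq⟩ := hheart
      have hTS := Triangle.shift_distinguished _ hTq (-1)
      set TS := (CategoryTheory.shiftFunctor (Triangle C) (-1 : ℤ)).obj (Triangle.mk i p hh)
        with hTSdef
      have e_mid : TS.obj₂ ≅ x := ((shiftFunctor C (-1 : ℤ)).mapIso ex).symm ≪≫ compIsoPN.app x
      have hT₂ : Triangle.mk (TS.mor₁ ≫ e_mid.hom) (e_mid.inv ≫ TS.mor₂) TS.mor₃
          ∈ distTriang C := by
        refine isomorphic_distinguished _ hTS _ ?_
        refine Triangle.isoMk _ _ (Iso.refl _) e_mid.symm (Iso.refl _) ?_ ?_ ?_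
        · show (TS.mor₁ ≫ e_mid.hom) ≫ e_mid.inv = 𝟙 _ ≫ TS.mor₁
          rw [assoc, e_mid.hom_inv_id, comp_id, id_comp]
        · show (e_mid.inv ≫ TS.mor₂) ≫ 𝟙 _ = e_mid.inv ≫ TS.mor₂
          rw [comp_id]
        · show TS.mor₃ ≫ (shiftFunctor C 1).map (𝟙 _) = 𝟙 _ ≫ TS.mor₃
          simp
      have hL1 : TS.obj₁ ∈ leftTilt C (heartSet C D)
          {c : C | HeartExt C (heartSet C D) {s} c} := by
        apply ExtClosure.of
        right
        show τ₁⟦(-1 : ℤ)⟧⟦(-(-1) : ℤ)⟧ ∈ {c : C | HeartExt C (heartSet C D) {s} c}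
        rw [henegneg]
        have e : τ₁ ≅ τ₁⟦(-1 : ℤ)⟧⟦(1 : ℤ)⟧ := (compIsoNP.app τ₁).symm
        exact HeartExt.iso e (A_iso hD e h1) ht
      have hL2 : TS.obj₃ ∈ leftTilt C (heartSet C D)
          {c : C | HeartExt C (heartSet C D) {s} c} := by
        apply ExtClosure.of
        right
        show τ₂⟦(-1 : ℤ)⟧⟦(-(-1) : ℤ)⟧ ∈ {c : C | HeartExt C (heartSet C D) {s} c}
        rw [henegneg]
        have e : τ₂ ≅ τ₂⟦(-1 : ℤ)⟧⟦(1 : ℤ)⟧ := (compIsoNP.app τ₂).symm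
        exact HeartExt.iso e (A_iso hD e h3) hf
      rcases hsimp.2.2 _ _ (heartTriangle_mk hL1 hsimp.1 hL2 hT₂) with hz | hz
      · have hIso : IsIso (e_mid.inv ≫ TS.mor₂) :=
          (Triangle.isZero₁_iff_isIso₂ _ hT₂).1 hz
        refine ih2 x ?_ hsimp
        exact (shiftFunctor C (1 : ℤ)).mapIso (asIso (e_mid.inv ≫ TS.mor₂)) ≪≫
          compIsoNP.app τ₂
      · have hIso : IsIso (TS.mor₁ ≫ e_mid.hom) :=
          (Triangle.isZero₃_iff_isIso₁ _ hT₂).1 hz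
        refine ih1 x ?_ hsimp
        exact (shiftFunctor C (1 : ℤ)).mapIso (asIso (TS.mor₁ ≫ e_mid.hom)).symm ≪≫
          compIsoNP.app τ₁
  have main : ∀ x, ExtClosure C (perpIn C (heartSet C D)
        {c : C | HeartExt C (heartSet C D) {s} c} ∪
        shiftSet C {c : C | HeartExt C (heartSet C D) {s} c} (-1)) x →
      SimpleIn C (leftTilt C (heartSet C D) {c : C | HeartExt C (heartSet C D) {s} c}) x →
      Nonempty (x ≅ s⟦(-1 : ℤ)⟧) ∨
        x ∈ perpIn C (heartSet C D) {c : C | HeartExt C (heartSet C D) {s} c} := by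
    intro x hx
    induction hx with
    | @of c h =>
      intro hsimp
      rcases h with hF | hT'
      · exact Or.inr hF
      · left
        have hT2 : c⟦(-(-1) : ℤ)⟧ ∈ {c : C | HeartExt C (heartSet C D) {s} c} := hT'
        rw [henegneg] at hT2
        exact subT _ hT2 c (Iso.refl _) hsimp
    | @zero c h =>
      intro hsimp
      exact (hsimp.2.1 h).elim
    | @iso x₀ y₀ e h ih =>
      intro hsimp
      have hsimp₀ := simple_iso e h hsimp
      rcases ih hsimp₀ with hl | hr
      · obtain ⟨eiso⟩ := hl
        exact Or.inl ⟨e.symm ≪≫ eiso⟩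
      · exact Or.inr (F_iso hD e hr)
    | @ext a b c2 f g hcomm hT ha hc iha ihc =>
      intro hsimp
      rcases hsimp.2.2 a c2 (heartTriangle_mk ha hsimp.1 hc hT) with hz | hz
      · have hIso : IsIso g := (Triangle.isZero₁_iff_isIso₂ _ hT).1 hz
        have hsimp' := simple_iso (asIso g).symm hc hsimp
        rcases ihc hsimp' with hl | hr
        · obtain ⟨eiso⟩ := hl
          exact Or.inl ⟨asIso g ≪≫ eiso⟩
        · exact Or.inr (F_iso hD (asIso g).symm hr)
      · have hIso : IsIso f := (Triangle.isZero₃_iff_isIso₁ _ hT).1 hz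
        have hsimp' := simple_iso (asIso f) ha hsimp
        rcases iha hsimp' with hl | hr
        · obtain ⟨eiso⟩ := hl
          exact Or.inl ⟨(asIso f).symm ≪≫ eiso⟩
        · exact Or.inr (F_iso hD (asIso f) hr)
  intro x hx
  exact main x hx.1 hx

end Paper
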